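/- Let m, a, b be positive integers, and set N := 2m+1 and d := a+b. Let F(x,y,z) := x^{aN} y^{bN} + (x^N + y^N + x^m y^m z)^d ∈ ℂ[x,y,z]. Then for every t ∈ ℂ with t ≠ 0, the set { z ∈ ℂ : F(1, t, z) = 0 } has exactly d elements. (Equivalently: every line y = t x with t ≠ 0, ∞ through the point P = [0:0:1] meets the curve F = 0 in exactly d points outside P.) -/

import Mathlib

open MvPolynomial

lemma ncard_pow_eq (d : ℕ) (hd : 0 < d) (c : ℂ) (hc : c ≠ 0) :
    Set.ncard {w : ℂ | w ^ d = c} = d := by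
  have hζ := Complex.isPrimitiveRoot_exp d hd.ne'
  have hex : ∃ α : ℂ, α ^ d = c := IsAlgClosed.exists_pow_nat_eq c hd
  have hset : {w : ℂ | w ^ d = c} = ↑(Polynomial.nthRoots d c).toFinset := by
    ext w
    simp [Polynomial.mem_nthRoots hd]
  rw [hset, Set.ncard_coe_finset, Multiset.toFinset_card_of_nodup (hζ.nthRoots_nodup hc),
    hζ.card_nthRoots, if_pos hex]

/-- With `N = 2m+1`, `d = a+b` and
`F = x^{aN} y^{bN} + (x^N + y^N + x^m y^m z)^d`, for every `t ∈ ℂ`, `t ≠ 0`, the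
set `{z ∈ ℂ : F(1,t,z) = 0}` has exactly `d` elements. -/
theorem stmt_8 (m a b N d : ℕ) (hm : 0 < m) (ha : 0 < a) (hb : 0 < b)
    (hN : N = 2 * m + 1) (hd : d = a + b)
    (F : MvPolynomial (Fin 3) ℂ)
    (hF : F = X 0 ^ (a * N) * X 1 ^ (b * N) +
      (X 0 ^ N + X 1 ^ N + X 0 ^ m * X 1 ^ m * X 2) ^ d)
    (t : ℂ) (ht : t ≠ 0) :
    Set.ncard {z : ℂ | MvPolynomial.eval ![1, t, z] F = 0} = d := by
  have hd0 : 0 < d := by omega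
  have htm : (t : ℂ) ^ m ≠ 0 := pow_ne_zero _ ht
  have hc : -(t ^ (b * N)) ≠ 0 := by
    simp [pow_ne_zero _ ht]
  have key : {z : ℂ | MvPolynomial.eval ![1, t, z] F = 0}
      = (fun w => (w - 1 - t ^ N) / t ^ m) '' {w : ℂ | w ^ d = -(t ^ (b * N))} := by
    ext z
    simp only [hF, Set.mem_setOf_eq, Set.mem_image, map_add, map_mul, map_pow, eval_X,
      Matrix.cons_val_zero, Matrix.cons_val_one, Matrix.head_cons, Matrix.cons_val_two, Matrix.tail_cons]
    constructor
    · intro h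
      refine ⟨1 + t ^ N + t ^ m * z, ?_, ?_⟩
      · have : (1 + t ^ N + t ^ m * z) ^ d = -(t ^ (b * N)) := by
          have := h
          simp only [one_pow, one_mul] at this
          linear_combination this
        simpa using this
      · field_simp
        ring
    · rintro ⟨w, hw, rfl⟩
      have hz : (1 : ℂ) + t ^ N + t ^ m * ((w - 1 - t ^ N) / t ^ m) = w := by
        field_simp
        ring
      simp only [one_pow, one_mul, hz]
      rw [hw]
      ring
  rw [key, Set.ncard_image_of_injective _ ?_, ncard_pow_eq d hd0 _ hc]
  intro x y hxy
  simpa [div_eq_div_iff htm htm, sub_eq_sub_iff_add_eq_add, htm] using hxy
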